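/- In an undirected graph on a finite vertex set V, the length of any strictly increasing chain of closed sets ending at a closed set X is at most the number of essential equilocality classes contained in X: if Y₀ ⊊ Y₁ ⊊ ⋯ ⊊ Yₙ = X with all Yᵢ closed, then n is at most the number of equilocality classes consisting of essential vertices that are contained in X. -/

import Mathlib

/-- The dual of a subset `X` of the vertex set: all vertices adjacent to every element of `X`. -/
def dual {V : Type*} (Adj : V → V → Prop) (X : Set V) : Set V := {y | ∀ x ∈ X, Adj x y}

/-- A subset is closed if it equals its double dual. -/
def Closed {V : Type*} (Adj : V → V → Prop) (X : Set V) : Prop := dual Adj (dual Adj X) = X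

/-- The neighborhood of a vertex. -/
def nbhd {V : Type*} (Adj : V → V → Prop) (x : V) : Set V := {y | Adj x y}

/-- A vertex is essential if its neighborhood is a completely meet-irreducible element of
the lattice of closed sets. -/
def Essential {V : Type*} (Adj : V → V → Prop) (x : V) : Prop :=
  ∀ F : Set (Set V), (∀ X ∈ F, Closed Adj X) → ⋂₀ F = nbhd Adj x → nbhd Adj x ∈ F

lemma dual_anti {V : Type*} (Adj : V → V → Prop) {A B : Set V} (h : A ⊆ B) :
    dual Adj B ⊆ dual Adj A := fun y hy x hx => hy x (h hx)

lemma subset_dual_dual {V : Type*} {Adj : V → V → Prop} (hs : Symmetric Adj) (A : Set V) :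
    A ⊆ dual Adj (dual Adj A) := fun x hx y hy => hs (hy x hx)

lemma closed_dual {V : Type*} {Adj : V → V → Prop} (hs : Symmetric Adj) (A : Set V) :
    Closed Adj (dual Adj A) :=
  Set.Subset.antisymm (dual_anti Adj (subset_dual_dual hs A)) (subset_dual_dual hs (dual Adj A))

/-- Separation lemma: a closed set can be separated from any outside point by an essential
neighborhood. -/
lemma sep_lemma {V : Type*} [Fintype V] {Adj : V → V → Prop} (hs : Symmetric Adj) :
    ∀ k (Z : Set V), Closed Adj Z → Zᶜ.ncard ≤ k → ∀ z ∉ Z,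
      ∃ x, Essential Adj x ∧ Z ⊆ nbhd Adj x ∧ z ∉ nbhd Adj x := by
  intro k
  induction k with
  | zero =>
    intro Z _ hcard z hz
    exfalso
    have h0 : Zᶜ.ncard = 0 := Nat.le_zero.mp hcard
    have hempty : Zᶜ = ∅ := (Set.ncard_eq_zero (Set.toFinite _)).mp h0
    have : Z = Set.univ := Set.compl_empty_iff.mp hempty
    exact hz (this ▸ Set.mem_univ z)
  | succ k ih =>
    intro Z hZ hcard z hz
    have h1 : ¬ ∀ w ∈ dual Adj Z, Adj w z := by
      intro h
      exact hz (hZ ▸ (h : z ∈ dual Adj (dual Adj Z)))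
    push_neg at h1
    obtain ⟨w, hw, hwz⟩ := h1
    have hZw : Z ⊆ nbhd Adj w := fun y hy => hs (hw y hy)
    by_cases hE : Essential Adj w
    · exact ⟨w, hE, hZw, hwz⟩
    · simp only [Essential, not_forall] at hE
      obtain ⟨F, hFc, hFi, hFn⟩ := hE
      have hzF : z ∉ ⋂₀ F := by rw [hFi]; exact hwz
      obtain ⟨W, hWF, hzW⟩ : ∃ W ∈ F, z ∉ W := by
        by_contra h
        push_neg at h
        exact hzF (Set.mem_sInter.mpr h)
      have hNW : nbhd Adj w ⊆ W := hFi ▸ Set.sInter_subset_of_mem hWF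
      have hZW : Z ⊆ W := hZw.trans hNW
      have hne : nbhd Adj w ≠ W := fun h => hFn (h ▸ hWF)
      have hss : Wᶜ ⊂ Zᶜ := by
        refine (Set.compl_subset_compl.mpr hZW).ssubset_of_ne ?_
        intro h
        have hWZ : W = Z := by
          have := congrArg compl h
          simpa using this
        exact hne (Set.Subset.antisymm hNW (hWZ ▸ hZw))
      have hlt : Wᶜ.ncard < Zᶜ.ncard := Set.ncard_lt_ncard hss (Set.toFinite _)
      obtain ⟨x, hx, hWx, hzx⟩ := ih W (hFc W hWF) (by omega) z hzW
      exact ⟨x, hx, hZW.trans hWx, hzx⟩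

theorem stmt_19 {V : Type*} [Fintype V] (Adj : V → V → Prop) (hs : Symmetric Adj)
    (n : ℕ) (Y : Fin (n + 1) → Set V) (hclosed : ∀ i, Closed Adj (Y i))
    (hmono : StrictMono Y) (X : Set V) (hlast : Y (Fin.last n) = X) :
    n ≤ {C : Set V | ∃ x : V, Essential Adj x ∧
          C = {y : V | nbhd Adj y = nbhd Adj x} ∧ C ⊆ X}.ncard := by
  classical
  have hXc : Closed Adj X := hlast ▸ hclosed (Fin.last n)
  have hcc : ∀ i, dual Adj (dual Adj (Y i)) = Y i := hclosed
  have hDanti : ∀ i j : Fin (n + 1), i ≤ j → dual Adj (Y j) ⊆ dual Adj (Y i) :=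
    fun i j h => dual_anti Adj (hmono.monotone h)
  have hDne : ∀ i j : Fin (n + 1), i < j → dual Adj (Y j) ≠ dual Adj (Y i) := by
    intro i j h heq
    have : Y j = Y i := by rw [← hcc j, ← hcc i, heq]
    exact (hmono h).ne' this
  have key : ∀ i : Fin n, ∃ x, Essential Adj x ∧ dual Adj (Y i.succ) ⊆ nbhd Adj x ∧
      ¬ dual Adj (Y i.castSucc) ⊆ nbhd Adj x := by
    intro i
    have hlt : i.castSucc < i.succ := Fin.castSucc_lt_succ
    obtain ⟨z, hz1, hz2⟩ : ∃ z, z ∈ dual Adj (Y i.castSucc) ∧ z ∉ dual Adj (Y i.succ) := by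
      by_contra h
      push_neg at h
      exact hDne _ _ hlt (Set.Subset.antisymm (hDanti _ _ hlt.le) h)
    obtain ⟨x, hx, h1, h2⟩ := sep_lemma hs _ (dual Adj (Y i.succ)) (closed_dual hs _)
      le_rfl z hz2
    exact ⟨x, hx, h1, fun hc => h2 (hc hz1)⟩
  choose x hxE hx1 hx2 using key
  have hdX : ∀ i : Fin n, dual Adj X ⊆ nbhd Adj (x i) := by
    intro i
    rw [← hlast]
    exact (hDanti i.succ (Fin.last n) (Fin.le_last _)).trans (hx1 i)
  have hmemX : ∀ i : Fin n, ∀ y : V, nbhd Adj y = nbhd Adj (x i) → y ∈ X := by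
    intro i y hy
    have h1 : dual Adj X ⊆ nbhd Adj y := hy ▸ hdX i
    have h2 : y ∈ dual Adj (dual Adj X) := fun w hw => hs (h1 hw)
    rwa [hXc] at h2
  have hord : ∀ i j : Fin n, i < j → nbhd Adj (x i) ≠ nbhd Adj (x j) := by
    intro i j hij heq
    have hle : (i.succ : Fin (n + 1)) ≤ j.castSucc := by
      rw [Fin.le_def]
      simp only [Fin.val_succ, Fin.coe_castSucc]
      exact hij
    have : dual Adj (Y j.castSucc) ⊆ nbhd Adj (x i) := (hDanti _ _ hle).trans (hx1 i)
    rw [heq] at this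
    exact hx2 j this
  have hinj : Function.Injective fun i : Fin n => nbhd Adj (x i) := by
    intro i j h
    by_contra hne
    rcases lt_or_gt_of_ne hne with hlt | hlt
    · exact hord i j hlt h
    · exact hord j i hlt h.symm
  set S := {C : Set V | ∃ x : V, Essential Adj x ∧
      C = {y : V | nbhd Adj y = nbhd Adj x} ∧ C ⊆ X} with hS
  let f : Fin n → Set V := fun i => {y : V | nbhd Adj y = nbhd Adj (x i)}
  have hfmem : ∀ i, f i ∈ S := fun i =>
    ⟨x i, hxE i, rfl, fun y hy => hmemX i y hy⟩
  have hfinj : Function.Injective f := by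
    intro i j h
    have hxi : x i ∈ f i := rfl
    rw [h] at hxi
    exact hinj hxi
  have hsub : Set.range f ⊆ S := by rintro _ ⟨i, rfl⟩; exact hfmem i
  have h1 : (Set.range f).ncard = n := by
    rw [← Set.image_univ, Set.ncard_image_of_injective _ hfinj, Set.ncard_univ,
      Nat.card_eq_fintype_card, Fintype.card_fin]
  calc n = (Set.range f).ncard := h1.symm
    _ ≤ S.ncard := Set.ncard_le_ncard hsub (Set.toFinite S)
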